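/- Let S = ℕ𝒜 be a numerical semigroup of Northcott type with generators a_1,…,a_n, exponents u_{ij} > 0, σ = (1 2 ⋯ n−1), and N = ∑_{i=1}^{n-1}(u_{ni}+u_{σ(i),i}−1)·a_i. Then the Frobenius number of S is F(S) = N − min{ u_{σ(j),j}·a_j : j ∈ {1,…,n−1} } − a_n. -/

import Mathlib

open MvPolynomial

lemma ntAux_gcd_bezout {ι : Type*} [DecidableEq ι] (s : Finset ι) (f : ι → ℕ) :
    ∃ g : ι → ℤ, ∑ i ∈ s, g i * f i = s.gcd f := by
  induction s using Finset.induction with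
  | empty => exact ⟨0, by simp⟩
  | @insert a s ha ih =>
    obtain ⟨g, hg⟩ := ih
    refine ⟨Function.update (fun i => (f a).gcdB (s.gcd f) * g i) a ((f a).gcdA (s.gcd f)), ?_⟩
    rw [Finset.sum_insert ha, Function.update_self]
    have hc : ∀ i ∈ s, Function.update (fun i => (f a).gcdB (s.gcd f) * g i) a
        ((f a).gcdA (s.gcd f)) i * f i = (f a).gcdB (s.gcd f) * (g i * f i) := by
      intro i hi
      rw [Function.update_of_ne (by rintro rfl; exact ha hi)]
      ring
    rw [Finset.sum_congr rfl hc, ← Finset.mul_sum, hg, Finset.gcd_insert]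
    have h2 : gcd (f a) (s.gcd f) = Nat.gcd (f a) (s.gcd f) := rfl
    rw [h2, Nat.gcd_eq_gcd_ab]
    ring

lemma ntAux_mem_closure_iff {ι : Type*} [Fintype ι] [DecidableEq ι] (a : ι → ℕ) (s : ℕ) :
    s ∈ AddSubmonoid.closure (Set.range a) ↔ ∃ ν : ι → ℕ, s = ∑ i, ν i * a i := by
  constructor
  · intro hs
    induction hs using AddSubmonoid.closure_induction with
    | mem x hx =>
      obtain ⟨i, rfl⟩ := hx
      exact ⟨Pi.single i 1, by simp [Pi.single_apply, Finset.sum_ite_eq']⟩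
    | zero => exact ⟨0, by simp⟩
    | add x y _ _ hx hy =>
      obtain ⟨ν, rfl⟩ := hx; obtain ⟨ν', rfl⟩ := hy
      exact ⟨ν + ν', by simp [add_mul, Finset.sum_add_distrib]⟩
  · rintro ⟨ν, rfl⟩
    apply AddSubmonoid.sum_mem
    intro i _
    exact AddSubmonoid.nsmul_mem _
      (AddSubmonoid.subset_closure (Set.mem_range_self i)) (ν i)

lemma ntAux_sum_update {ι : Type*} [Fintype ι] [DecidableEq ι] (b : ι → ℕ) (f : ι → ℕ)
    (i : ι) (x : ℕ) :
    ∑ j, Function.update f i x j * b j + f i * b i = ∑ j, f j * b j + x * b i := by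
  classical
  have hc : ∀ j, Function.update f i x j * b j
      = Function.update (fun j => f j * b j) i (x * b i) j := by
    intro j
    rcases eq_or_ne j i with rfl | h
    · simp
    · simp [Function.update_of_ne h]
  rw [Finset.sum_congr rfl (fun j _ => hc j),
    Finset.sum_update_of_mem (Finset.mem_univ i) (fun j => f j * b j) (x * b i),
    Finset.sdiff_singleton_eq_erase, ← Finset.add_sum_erase _ _ (Finset.mem_univ i)]
  ring

lemma ntAux_cyc {m' : ℕ} (hm : 0 < m') (σ : Fin m' → Fin m')
    (hσ : ∀ i : Fin m', (σ i : ℕ) = ((i : ℕ) + 1) % m')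
    (P : Fin m' → Prop) (hstep : ∀ i, P i → P (σ i)) (i0 : Fin m') (h0 : P i0) : ∀ j, P j := by
  have key : ∀ k : ℕ, P ⟨((i0 : ℕ) + k) % m', Nat.mod_lt _ hm⟩ := by
    intro k
    induction k with
    | zero =>
      have : (⟨((i0 : ℕ) + 0) % m', Nat.mod_lt _ hm⟩ : Fin m') = i0 := by
        ext; simp [Nat.mod_eq_of_lt i0.isLt]
      rwa [this]
    | succ k ih =>
      have h2 := hstep _ ih
      have h3 : σ (⟨((i0 : ℕ) + k) % m', Nat.mod_lt _ hm⟩ : Fin m')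
          = ⟨((i0 : ℕ) + (k + 1)) % m', Nat.mod_lt _ hm⟩ := by
        ext
        rw [hσ]
        show (((i0 : ℕ) + k) % m' + 1) % m' = _
        rw [Nat.mod_add_mod, ← Nat.add_assoc]
      rwa [h3] at h2
  intro j
  have h4 : (⟨((i0 : ℕ) + (m' - (i0 : ℕ) + (j : ℕ))) % m', Nat.mod_lt _ hm⟩ : Fin m') = j := by
    ext
    show ((i0 : ℕ) + (m' - (i0 : ℕ) + (j : ℕ))) % m' = (j : ℕ)
    have h5 : (i0 : ℕ) + (m' - (i0 : ℕ) + (j : ℕ)) = m' + (j : ℕ) := by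
      have := i0.isLt; omega
    rw [h5, Nat.add_mod_left, Nat.mod_eq_of_lt j.isLt]
  have := key (m' - (i0 : ℕ) + (j : ℕ))
  rwa [h4] at this

lemma ntAux_sum_tau {m' : ℕ} {M : Type*} [AddCommMonoid M] (σ τ : Fin m' → Fin m')
    (hστ : ∀ i, σ (τ i) = i) (hτσ : ∀ i, τ (σ i) = i) (f : Fin m' → M) :
    ∑ i, f (τ i) = ∑ i, f i :=
  Equiv.sum_comp ⟨τ, σ, hστ, hτσ⟩ f

lemma ntAux_oneSide {m' : ℕ} (hm : 0 < m') (σ : Fin m' → Fin m')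
    (hσ : ∀ i : Fin m', (σ i : ℕ) = ((i : ℕ) + 1) % m')
    (uu vv : Fin m' → ℕ) (hup : ∀ i, 0 < uu i) (hvp : ∀ i, 0 < vv i)
    (m : Fin m' → ℤ) (lam lam' : Fin m' → ℕ)
    (hlam : ∀ i, lam i < uu i + vv i) (hlam' : ∀ i, lam' i < uu i + vv i)
    (hB : ∃ j, lam j < uu j)
    (hrel : ∀ i, (lam i : ℤ) - lam' i = m i * (uu i + vv i) - m (σ i) * vv i)
    (i0 : Fin m') (hM : 1 ≤ m i0) (hmax : ∀ j, m j ≤ m i0) : False := by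
  set M := m i0 with hMdef
  have step : ∀ i, m i = M → m (σ i) = M := by
    intro i hi
    have h1 := hrel i
    have h2 := hlam i
    have h2' : (lam i : ℤ) < (uu i : ℤ) + vv i := by exact_mod_cast h2
    have h3 : (0:ℤ) ≤ (lam' i : ℤ) := Int.natCast_nonneg _
    have h4 : m (σ i) ≤ M := hmax _
    by_contra h5
    have h6 : m (σ i) ≤ M - 1 := by omega
    have hv : (0:ℤ) < vv i := by exact_mod_cast hvp i
    have hu : (0:ℤ) < uu i := by exact_mod_cast hup i
    nlinarith [mul_le_mul_of_nonneg_right h6 (le_of_lt hv)]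
  have hall : ∀ j, m j = M := ntAux_cyc hm σ hσ (fun j => m j = M) step i0 rfl
  obtain ⟨j, hj⟩ := hB
  have h1 := hrel j
  rw [hall j, hall (σ j)] at h1
  have h3 : (0:ℤ) ≤ (lam' j : ℤ) := Int.natCast_nonneg _
  have hu : (0:ℤ) < uu j := by exact_mod_cast hup j
  have hj' : (lam j : ℤ) < uu j := by exact_mod_cast hj
  nlinarith

lemma ntAux_CL {m' : ℕ} (hm : 0 < m') (σ : Fin m' → Fin m')
    (hσ : ∀ i : Fin m', (σ i : ℕ) = ((i : ℕ) + 1) % m')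
    (uu vv : Fin m' → ℕ) (hup : ∀ i, 0 < uu i) (hvp : ∀ i, 0 < vv i)
    (m : Fin m' → ℤ) (lam lam' : Fin m' → ℕ)
    (hlam : ∀ i, lam i < uu i + vv i) (hlam' : ∀ i, lam' i < uu i + vv i)
    (hB : ∃ j, lam j < uu j) (hB' : ∃ j, lam' j < uu j)
    (hrel : ∀ i, (lam i : ℤ) - lam' i = m i * (uu i + vv i) - m (σ i) * vv i) :
    ∀ i, m i = 0 := by
  have hne : Nonempty (Fin m') := ⟨⟨0, hm⟩⟩
  obtain ⟨i0, -, hmax⟩ := Finset.exists_max_image Finset.univ m ⟨⟨0, hm⟩, Finset.mem_univ _⟩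
  obtain ⟨i1, -, hmin⟩ := Finset.exists_min_image Finset.univ m ⟨⟨0, hm⟩, Finset.mem_univ _⟩
  rcases le_or_gt (m i0) 0 with h | h
  · rcases le_or_gt 0 (m i1) with h' | h'
    · intro i
      have := hmax i (Finset.mem_univ i)
      have := hmin i (Finset.mem_univ i)
      omega
    · exfalso
      refine ntAux_oneSide hm σ hσ uu vv hup hvp (fun i => - m i) lam' lam hlam' hlam hB' ?_ i1
        (by show (1:ℤ) ≤ -m i1; omega)
        (fun j => by show -m j ≤ -m i1; have := hmin j (Finset.mem_univ j); omega)
      intro i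
      have := hrel i
      push_cast
      linarith
  · exfalso
    exact ntAux_oneSide hm σ hσ uu vv hup hvp m lam lam' hlam hlam' hB hrel i0 (by omega)
      (fun j => hmax j (Finset.mem_univ j))

lemma ntAux_red {m' : ℕ} (hm : 0 < m') (σ τ : Fin m' → Fin m')
    (hστ : ∀ i, σ (τ i) = i) (hτσ : ∀ i, τ (σ i) = i) (hτne : ∀ i, τ i ≠ i)
    (b : Fin m' → ℕ) (c : ℕ) (hc : 0 < c)
    (uu vv pp : Fin m' → ℕ) (hppos : ∀ i, 0 < pp i)
    (hR : ∀ i, (uu i + vv i) * b i = vv (τ i) * b (τ i) + pp i * c)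
    (lam : Fin m' → ℕ) :
    ∃ lam' : Fin m' → ℕ, ∃ k : ℕ, (∀ i, lam' i < uu i + vv i) ∧ (∃ j, lam' j < uu j) ∧
      ∑ i, lam i * b i = ∑ i, lam' i * b i + k * c := by
  classical
  -- derive the D relation
  have hD : ∑ i, uu i * b i = (∑ i, pp i) * c := by
    have h1 : ∑ i, (uu i + vv i) * b i = ∑ i, (vv (τ i) * b (τ i) + pp i * c) :=
      Finset.sum_congr rfl (fun i _ => hR i)
    have h2 : ∑ i, vv (τ i) * b (τ i) = ∑ i, vv i * b i :=
      Equiv.sum_comp ⟨τ, σ, hστ, hτσ⟩ (fun i => vv i * b i)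
    have h3 : ∑ i, (vv (τ i) * b (τ i) + pp i * c) = ∑ i, vv i * b i + (∑ i, pp i) * c := by
      rw [Finset.sum_add_distrib, h2, Finset.sum_mul]
    have h4 : ∑ i, (uu i + vv i) * b i = ∑ i, uu i * b i + ∑ i, vv i * b i := by
      rw [← Finset.sum_add_distrib]
      exact Finset.sum_congr rfl (fun i _ => by ring)
    omega
  have key : ∀ V : ℕ, ∀ lam : Fin m' → ℕ, ∑ i, lam i * b i = V →
      ∃ lam' : Fin m' → ℕ, ∃ k : ℕ, (∀ i, lam' i < uu i + vv i) ∧ (∃ j, lam' j < uu j) ∧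
        ∑ i, lam i * b i = ∑ i, lam' i * b i + k * c := by
    intro V
    induction V using Nat.strong_induction_on with
    | _ V ih =>
      intro lam hV
      by_cases hbox : ∀ i, lam i < uu i + vv i
      · by_cases hsub : ∃ j, lam j < uu j
        · exact ⟨lam, 0, hbox, hsub, by simp⟩
        · push_neg at hsub
          set lam2 : Fin m' → ℕ := fun j => lam j - uu j with hlam2
          have hterm : ∀ j, lam j * b j = lam2 j * b j + uu j * b j := by
            intro j
            have hj := hsub j
            have e : lam j = lam2 j + uu j := by
              rw [hlam2]; simp only []; omega
            rw [e, add_mul]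
          have h1 : ∑ i, lam i * b i = ∑ i, lam2 i * b i + ∑ i, uu i * b i := by
            rw [← Finset.sum_add_distrib]
            exact Finset.sum_congr rfl (fun i _ => hterm i)
          have hP : 0 < ∑ i, pp i :=
            Finset.sum_pos (fun i _ => hppos i) ⟨⟨0, hm⟩, Finset.mem_univ _⟩
          have hlt : ∑ i, lam2 i * b i < V := by
            have : 0 < (∑ i, pp i) * c := Nat.mul_pos hP hc
            omega
          obtain ⟨lam', k, hk1, hk2, hk3⟩ := ih (∑ i, lam2 i * b i) hlt lam2 rfl
          exact ⟨lam', k + ∑ i, pp i, hk1, hk2, by rw [h1, hk3, hD]; ring⟩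
      · push_neg at hbox
        obtain ⟨i, hi⟩ := hbox
        have hne : τ i ≠ i := hτne i
        set f1 : Fin m' → ℕ := Function.update lam i (lam i - (uu i + vv i)) with hf1
        set lam2 : Fin m' → ℕ := Function.update f1 (τ i) (lam (τ i) + vv (τ i)) with hl2
        have hA := ntAux_sum_update b lam i (lam i - (uu i + vv i))
        rw [← hf1] at hA
        have hf1t : f1 (τ i) = lam (τ i) := by rw [hf1, Function.update_of_ne hne]
        have hB := ntAux_sum_update b f1 (τ i) (lam (τ i) + vv (τ i))
        rw [hf1t, ← hl2] at hB
        have e1 : (lam i - (uu i + vv i)) * b i + (uu i + vv i) * b i = lam i * b i := by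
          rw [← add_mul]; congr 1; omega
        have e2 : (lam (τ i) + vv (τ i)) * b (τ i) = lam (τ i) * b (τ i) + vv (τ i) * b (τ i) := by
          rw [add_mul]
        have hRi := hR i
        have hval : ∑ j, lam j * b j = ∑ j, lam2 j * b j + pp i * c := by
          omega
        have hlt : ∑ j, lam2 j * b j < V := by
          have : 0 < pp i * c := Nat.mul_pos (hppos i) hc
          omega
        obtain ⟨lam', k, hk1, hk2, hk3⟩ := ih (∑ j, lam2 j * b j) hlt lam2 rfl
        exact ⟨lam', k + pp i, hk1, hk2, by rw [hval, hk3]; ring⟩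
  exact key _ lam rfl

lemma ntAux_lattice {ι : Type*} [Fintype ι] [DecidableEq ι] (L : Submodule ℤ (ι → ℤ))
    (G : Set (MvPolynomial ι ℚ))
    (hG : ∀ g ∈ G, ∃ E F : ι → ℕ, g = (∏ j, X j ^ E j) - ∏ j, X j ^ F j ∧
      (fun j => (E j : ℤ) - F j) ∈ L)
    {A B : ι → ℕ}
    (hmem : ((∏ j, X j ^ A j) - ∏ j, X j ^ B j : MvPolynomial ι ℚ) ∈ Ideal.span G) :
    (fun j => (A j : ℤ) - B j) ∈ L := by
  classical
  let Q := (ι → ℤ) ⧸ L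
  let φ : MvPolynomial ι ℚ →ₐ[ℚ] AddMonoidAlgebra ℚ Q :=
    aeval (fun j => AddMonoidAlgebra.single
      (Submodule.Quotient.mk (p := L) (Pi.single j 1)) 1)
  have key : ∀ C : ι → ℕ, φ (∏ j, X j ^ C j)
      = AddMonoidAlgebra.single (Submodule.Quotient.mk (p := L) (fun j => (C j : ℤ))) 1 := by
    intro C
    rw [map_prod]
    have h1 : ∀ j, φ (X j ^ C j) = AddMonoidAlgebra.single
        (Submodule.Quotient.mk (p := L) (Pi.single j (C j : ℤ))) 1 := by
      intro j
      rw [map_pow]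
      have hx : φ (X j) = AddMonoidAlgebra.single
          (Submodule.Quotient.mk (p := L) (Pi.single j 1)) 1 := aeval_X _ j
      rw [hx, AddMonoidAlgebra.single_pow, one_pow]
      congr 1
      rw [← Submodule.Quotient.mk_smul]
      congr 1
      have : (C j : ℤ) • (Pi.single j (1:ℤ) : ι → ℤ) = Pi.single j (C j : ℤ) := by
        rw [← Pi.single_smul, smul_eq_mul, mul_one]
      rw [← this]
      norm_cast
    rw [Finset.prod_congr rfl (fun j _ => h1 j), AddMonoidAlgebra.prod_single]
    congr 1
    · show ∑ i : ι, L.mkQ (Pi.single i (C i : ℤ)) = L.mkQ (fun j => (C j : ℤ))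
      rw [← map_sum]
      congr 1
      exact Finset.univ_sum_single _
    · simp
  have hkill : Ideal.span G ≤ RingHom.ker φ.toRingHom := by
    rw [Ideal.span_le]
    intro g hg
    obtain ⟨E, F, rfl, hEF⟩ := hG g hg
    simp only [SetLike.mem_coe, RingHom.mem_ker, AlgHom.toRingHom_eq_coe, RingHom.coe_coe,
      map_sub]
    rw [key, key]
    have : Submodule.Quotient.mk (p := L) (fun j => (E j : ℤ))
        = Submodule.Quotient.mk (p := L) (fun j => (F j : ℤ)) := by
      rw [Submodule.Quotient.eq]
      exact hEF
    rw [this, sub_self]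
  have h0 : φ ((∏ j, X j ^ A j) - ∏ j, X j ^ B j) = 0 := by
    have := hkill hmem
    rwa [RingHom.mem_ker] at this
  rw [map_sub, key, key, sub_eq_zero] at h0
  have hq : Submodule.Quotient.mk (p := L) (fun j => (A j : ℤ))
      = Submodule.Quotient.mk (p := L) (fun j => (B j : ℤ)) := by
    rcases AddMonoidAlgebra.single_inj.mp h0 with ⟨hq, -⟩ | ⟨h1, -⟩
    · exact hq
    · exact absurd h1 one_ne_zero
  rw [Submodule.Quotient.eq] at hq
  exact hq

lemma ntAux_aeval_monomial {ι : Type*} [Fintype ι] (a : ι → ℕ) (C : ι → ℕ) :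
    aeval (R := ℚ) (fun i => (Polynomial.X : Polynomial ℚ) ^ a i) (∏ j, X j ^ C j)
      = Polynomial.X ^ (∑ j, C j * a j) := by
  rw [map_prod]
  have : ∀ j, aeval (R := ℚ) (fun i => (Polynomial.X : Polynomial ℚ) ^ a i) (X j ^ C j)
      = Polynomial.X ^ (C j * a j) := by
    intro j
    rw [map_pow, aeval_X, ← pow_mul, mul_comm]
  rw [Finset.prod_congr rfl (fun j _ => this j), Finset.prod_pow_eq_pow_sum]

lemma ntAux_prod_pow_single {ι : Type*} [Fintype ι] [DecidableEq ι] (t : ι) (e : ℕ) :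
    ∏ j, (X j : MvPolynomial ι ℚ) ^ Pi.single t e j = X t ^ e := by
  rw [Finset.prod_eq_single t]
  · rw [Pi.single_eq_same]
  · intro j _ hj
    rw [Pi.single_eq_of_ne hj, pow_zero]
  · intro h
    exact absurd (Finset.mem_univ t) h

lemma ntAux_prod_pow_single2 {ι : Type*} [Fintype ι] [DecidableEq ι] (t1 t2 : ι) (h : t1 ≠ t2)
    (e1 e2 : ℕ) :
    ∏ j, (X j : MvPolynomial ι ℚ) ^ ((Pi.single t1 e1 + Pi.single t2 e2 : ι → ℕ)) j
      = X t1 ^ e1 * X t2 ^ e2 := by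
  have : ∀ j, (X j : MvPolynomial ι ℚ) ^ ((Pi.single t1 e1 + Pi.single t2 e2 : ι → ℕ)) j
      = X j ^ Pi.single t1 e1 j * X j ^ Pi.single t2 e2 j := by
    intro j
    rw [Pi.add_apply, pow_add]
  rw [Finset.prod_congr rfl (fun j _ => this j), Finset.prod_mul_distrib,
    ntAux_prod_pow_single, ntAux_prod_pow_single]


/-- `σ` : the cycle `(1 2 ⋯ n−1)` in 0-based indexing on `{0,…,n-2}`. -/
def ntSig (n i : ℕ) : ℕ := if i = n - 2 then 0 else i + 1

/-- `σ⁻¹` in 0-based indexing on `{0,…,n-2}`. -/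
def ntTau (n i : ℕ) : ℕ := if i = 0 then n - 2 else i - 1

/-- The Northcott binomial `f_i = x_i^{u_{ni}+u_{σ(i),i}} − x_{σ⁻¹(i)}^{u_{i,σ⁻¹(i)}} x_n^{u_{in}}`
(0-based: index `n-1` plays the role of the paper's `n`). -/
noncomputable def ntF (K : Type*) [Field K] (n : ℕ) (hn : 3 ≤ n) (u : ℕ → ℕ → ℕ)
    (i : Fin (n - 1)) : MvPolynomial (Fin n) K :=
  X (⟨(i : ℕ), by have := i.isLt; omega⟩ : Fin n) ^ (u (n - 1) i + u (ntSig n i) i)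
    - X (⟨ntTau n i, by have := i.isLt; unfold ntTau; split <;> omega⟩ : Fin n) ^ (u i (ntTau n i))
      * X (⟨n - 1, by omega⟩ : Fin n) ^ (u i (n - 1))

/-- The Northcott binomial `D = x_1^{u_{n1}}⋯x_{n-1}^{u_{n,n-1}} − x_n^{∑ u_{in}}`. -/
noncomputable def ntD (K : Type*) [Field K] (n : ℕ) (hn : 3 ≤ n) (u : ℕ → ℕ → ℕ) :
    MvPolynomial (Fin n) K :=
  (∏ i : Fin (n - 1), X (⟨(i : ℕ), by have := i.isLt; omega⟩ : Fin n) ^ (u (n - 1) i))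
    - X (⟨n - 1, by omega⟩ : Fin n) ^ (∑ i : Fin (n - 1), u (i : ℕ) (n - 1))

/-- The critical ideal of Northcott type `⟨f_1,…,f_{n-1},D⟩`. -/
noncomputable def ntIdeal (K : Type*) [Field K] (n : ℕ) (hn : 3 ≤ n) (u : ℕ → ℕ → ℕ) :
    Ideal (MvPolynomial (Fin n) K) :=
  Ideal.span (Set.range (ntF K n hn u) ∪ {ntD K n hn u})

/-- Positivity of the relevant exponents `u_{ij} > 0`. -/
def ntPos (n : ℕ) (u : ℕ → ℕ → ℕ) : Prop :=
  ∀ i, i < n - 1 → 0 < u (n - 1) i ∧ 0 < u i (n - 1) ∧ 0 < u i (ntTau n i) ∧ 0 < u (ntSig n i) i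

/-- for a numerical semigroup `S` of Northcott type, with
`N = ∑_{i=1}^{n-1}(u_{ni}+u_{σ(i),i}−1)a_i`, the Frobenius number (the greatest integer not
in `S`) is `N − min_j u_{σ(j),j}a_j − a_n`. -/
theorem northcott_frobenius (n : ℕ) (hn : 3 ≤ n) (u : ℕ → ℕ → ℕ) (hu : ntPos n u)
    (a : Fin n → ℕ) (ha : ∀ i, 0 < a i) (hgcd : Finset.univ.gcd a = 1)
    (hker : RingHom.ker (MvPolynomial.aeval (R := ℚ)
        (fun i : Fin n => (Polynomial.X : Polynomial ℚ) ^ a i)).toRingHom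
      = ntIdeal ℚ n hn u) :
    IsGreatest {z : ℤ | ¬ ∃ s ∈ AddSubmonoid.closure (Set.range a), (s : ℤ) = z}
      ((∑ i : Fin (n - 1), ((u (n - 1) i + u (ntSig n i) i - 1)
            * a (⟨(i : ℕ), by have := i.isLt; omega⟩ : Fin n) : ℕ) : ℤ)
        - (sInf {m : ℕ | ∃ j : Fin (n - 1),
            m = u (ntSig n j) j * a (⟨(j : ℕ), by have := j.isLt; omega⟩ : Fin n)} : ℕ)
        - (a (⟨n - 1, by omega⟩ : Fin n) : ℕ)) := by
    classical
  obtain ⟨n', rfl⟩ : ∃ n', n = n' + 1 := ⟨n - 1, by omega⟩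
  have hn' : 2 ≤ n' := by omega
  -- abbreviations
  set bb : Fin n' → ℕ := fun i => a i.castSucc with hbb
  set cc : ℕ := a (Fin.last n') with hcc
  set uu : Fin n' → ℕ := fun i => u n' i with huu
  set vv : Fin n' → ℕ := fun i => u (ntSig (n' + 1) i) i with hvv
  set pp : Fin n' → ℕ := fun i => u i n' with hpp
  have hsig_lt : ∀ i : Fin n', ntSig (n' + 1) i < n' := by
    intro i; have := i.isLt; unfold ntSig; split <;> omega
  have htau_lt : ∀ i : Fin n', ntTau (n' + 1) i < n' := by
    intro i; have := i.isLt; unfold ntTau; split <;> omega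
  set σF : Fin n' → Fin n' := fun i => ⟨ntSig (n' + 1) i, hsig_lt i⟩ with hσF
  set τF : Fin n' → Fin n' := fun i => ⟨ntTau (n' + 1) i, htau_lt i⟩ with hτF
  have hστ : ∀ i, σF (τF i) = i := by
    intro i; have := i.isLt
    rw [hσF, hτF]
    ext
    show ntSig (n' + 1) (ntTau (n' + 1) i) = i
    unfold ntSig ntTau; split_ifs <;> (try contradiction) <;> omega
  have hτσ : ∀ i, τF (σF i) = i := by
    intro i; have := i.isLt
    rw [hσF, hτF]
    ext
    show ntTau (n' + 1) (ntSig (n' + 1) i) = i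
    unfold ntSig ntTau; split_ifs <;> (try contradiction) <;> omega
  have hτne : ∀ i, τF i ≠ i := by
    intro i h
    have h2 : ntTau (n' + 1) i = (i : ℕ) := by
      have := congrArg Fin.val h; exact this
    have := i.isLt
    unfold ntTau at h2; split_ifs at h2 <;> omega
  have hσval : ∀ i : Fin n', (σF i : ℕ) = ((i : ℕ) + 1) % n' := by
    intro i
    show ntSig (n' + 1) i = ((i : ℕ) + 1) % n'
    have := i.isLt
    unfold ntSig
    split_ifs with h
    · have : (i : ℕ) + 1 = n' := by omega
      rw [this, Nat.mod_self]
    · rw [Nat.mod_eq_of_lt (by omega)]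
  -- positivity
  have hup : ∀ i : Fin n', 0 < uu i := fun i => (hu i (by simpa using i.isLt)).1
  have hppos : ∀ i : Fin n', 0 < pp i := fun i => (hu i (by simpa using i.isLt)).2.1
  have hvp : ∀ i : Fin n', 0 < vv i := fun i => (hu i (by simpa using i.isLt)).2.2.2
  have hcpos : 0 < cc := ha (Fin.last n')
  have hbpos : ∀ i, 0 < bb i := fun i => ha i.castSucc
  -- vv (τF i) in terms of u
  have hvτ : ∀ i : Fin n', vv (τF i) = u (i : ℕ) (ntTau (n' + 1) (i : ℕ)) := by
    intro i
    rw [hvv]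
    show u (ntSig (n' + 1) (ntTau (n' + 1) (i : ℕ))) (ntTau (n' + 1) (i : ℕ)) = _
    congr 1
    have := i.isLt
    unfold ntSig ntTau; split_ifs <;> (try contradiction) <;> omega
  -- the Northcott relations from the kernel hypothesis
  have hR : ∀ i : Fin n', (uu i + vv i) * bb i = vv (τF i) * bb (τF i) + pp i * cc := by
    intro i
    have h0 : (ntF ℚ (n' + 1) hn u i) ∈ RingHom.ker (MvPolynomial.aeval (R := ℚ)
        (fun j : Fin (n' + 1) => (Polynomial.X : Polynomial ℚ) ^ a j)).toRingHom := by
      rw [hker]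
      exact Ideal.subset_span (Set.mem_union_left _ ⟨i, rfl⟩)
    rw [RingHom.mem_ker] at h0
    have h2 : (MvPolynomial.aeval (R := ℚ)
        (fun j : Fin (n' + 1) => (Polynomial.X : Polynomial ℚ) ^ a j)) (ntF ℚ (n' + 1) hn u i)
        = 0 := h0
    unfold ntF at h2
    rw [map_sub, map_pow, map_mul, map_pow, map_pow, aeval_X, aeval_X, aeval_X, sub_eq_zero,
      ← pow_mul, ← pow_mul, ← pow_mul, ← pow_add] at h2
    have h3 := congrArg Polynomial.natDegree h2
    rw [Polynomial.natDegree_X_pow, Polynomial.natDegree_X_pow] at h3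
    -- h3 : a ⟨i,_⟩ * (u n' i + u (ntSig _ i) i) = a ⟨ntTau _ i,_⟩ * u i (ntTau _ i) + a ⟨n',_⟩ * u i n'
    rw [hvτ i]
    show (uu i + vv i) * a i.castSucc = u (i : ℕ) (ntTau (n' + 1) (i : ℕ)) * a (τF i).castSucc
      + pp i * a (Fin.last n')
    rw [mul_comm (uu i + vv i), mul_comm _ (a (τF i).castSucc), mul_comm (pp i)]
    exact h3
  -- lattice vectors
  set EE : Fin n' → (Fin (n' + 1) → ℕ) := fun i => Pi.single i.castSucc (uu i + vv i) with hEE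
  set FF : Fin n' → (Fin (n' + 1) → ℕ) :=
    fun i => Pi.single (τF i).castSucc (vv (τF i)) + Pi.single (Fin.last n') (pp i) with hFF
  set rvec : Fin n' → (Fin (n' + 1) → ℤ) := fun i j => (EE i j : ℤ) - (FF i j : ℤ) with hrvec
  set L : Submodule ℤ (Fin (n' + 1) → ℤ) := Submodule.span ℤ (Set.range rvec) with hL
  have hcastne : ∀ t : Fin n', Fin.castSucc t ≠ Fin.last n' := by
    intro t h
    have := congrArg Fin.val h
    simp at this
    omega
  have hntF_eq : ∀ i : Fin n', ntF ℚ (n' + 1) hn u i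
      = (∏ j, X j ^ EE i j) - ∏ j, X j ^ FF i j := by
    intro i
    rw [hEE, hFF]
    unfold ntF
    rw [ntAux_prod_pow_single, ntAux_prod_pow_single2 _ _ (hcastne (τF i)), hvτ i]
    rfl
  have hntD_eq : ntD ℚ (n' + 1) hn u
      = (∏ j, X j ^ (fun j : Fin (n' + 1) =>
            if h : (j : ℕ) < n' then uu ⟨j, h⟩ else 0) j)
        - ∏ j, X j ^ (Pi.single (Fin.last n') (∑ i : Fin n', pp i) : Fin (n' + 1) → ℕ) j := by
    unfold ntD
    rw [ntAux_prod_pow_single, Fin.prod_univ_castSucc]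
    have h1 : (fun j : Fin (n' + 1) => if h : (j : ℕ) < n' then uu ⟨j, h⟩ else 0)
        (Fin.last n') = 0 := by
      simp
    rw [h1, pow_zero, mul_one]
    have h2 : ∀ i : Fin n', (X (R := ℚ) i.castSucc) ^ ((fun j : Fin (n' + 1) =>
        if h : (j : ℕ) < n' then uu ⟨j, h⟩ else 0) i.castSucc) = X i.castSucc ^ uu i := by
      intro i
      congr 1
      show dite _ _ _ = uu i
      rw [dif_pos (show ((i.castSucc : Fin (n' + 1)) : ℕ) < n' from i.isLt)]
      rfl
    rw [Finset.prod_congr rfl (fun i _ => h2 i)]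
    rfl
  -- coordinates of the lattice vectors
  have hrv_last : ∀ i : Fin n', rvec i (Fin.last n') = -(pp i : ℤ) := by
    intro i
    show ((EE i (Fin.last n') : ℤ) - FF i (Fin.last n')) = _
    rw [hEE, hFF]
    simp only [Pi.add_apply, Pi.single_eq_of_ne (Ne.symm (hcastne i)),
      Pi.single_eq_of_ne (Ne.symm (hcastne (τF i))), Pi.single_eq_same]
    push_cast
    ring
  have hcond : ∀ i t : Fin n', (t = τF i) ↔ (σF t = i) := by
    intro i t
    constructor
    · rintro rfl; exact hστ i
    · rintro rfl; exact (hτσ t).symm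
  have hrv_cast : ∀ i t : Fin n', rvec i (Fin.castSucc t)
      = (if t = i then ((uu i + vv i : ℕ) : ℤ) else 0)
        - (if σF t = i then (vv (τF i) : ℤ) else 0) := by
    intro i t
    show ((EE i (Fin.castSucc t) : ℤ) - FF i (Fin.castSucc t)) = _
    rw [hEE, hFF]
    simp only [Pi.add_apply, Pi.single_apply, Fin.castSucc_inj]
    rw [if_neg (hcastne t), add_zero]
    simp only [hcond i t]
    split_ifs <;> push_cast <;> ring
  have hsumlast : ∀ mm : Fin n' → ℤ,
      (∑ i, mm i • rvec i) (Fin.last n') = - ∑ i, mm i * pp i := by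
    intro mm
    rw [Finset.sum_apply]
    have : ∀ i : Fin n', (mm i • rvec i) (Fin.last n') = -(mm i * pp i) := by
      intro i
      rw [Pi.smul_apply, smul_eq_mul, hrv_last]
      ring
    rw [Finset.sum_congr rfl (fun i _ => this i)]
    rw [Finset.sum_neg_distrib]
  have hsumvec : ∀ (mm : Fin n' → ℤ) (t : Fin n'),
      (∑ i, mm i • rvec i) (Fin.castSucc t) = mm t * (uu t + vv t) - mm (σF t) * vv t := by
    intro mm t
    rw [Finset.sum_apply]
    have e1 : ∀ i : Fin n', (mm i • rvec i) (Fin.castSucc t)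
        = (if t = i then mm i * (uu i + vv i) else 0)
          - (if σF t = i then mm i * vv (τF i) else 0) := by
      intro i
      rw [Pi.smul_apply, smul_eq_mul, hrv_cast]
      split_ifs <;> push_cast <;> ring
    rw [Finset.sum_congr rfl (fun i _ => e1 i), Finset.sum_sub_distrib,
      Finset.sum_ite_eq, Finset.sum_ite_eq]
    simp [hτσ t]
  -- the D vector lies in the lattice
  have hDvecL : (fun j : Fin (n' + 1) =>
      (((if h : (j : ℕ) < n' then uu ⟨j, h⟩ else 0) : ℕ) : ℤ)
      - ((Pi.single (Fin.last n') (∑ i : Fin n', pp i) : Fin (n' + 1) → ℕ) j : ℤ)) ∈ L := by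
    have heq : (fun j : Fin (n' + 1) =>
        (((if h : (j : ℕ) < n' then uu ⟨j, h⟩ else 0) : ℕ) : ℤ)
        - ((Pi.single (Fin.last n') (∑ i : Fin n', pp i) : Fin (n' + 1) → ℕ) j : ℤ))
        = ∑ i : Fin n', rvec i := by
      funext j
      rw [Finset.sum_apply]
      induction j using Fin.lastCases with
      | last =>
        rw [Finset.sum_congr rfl (fun i (_ : i ∈ Finset.univ) => hrv_last i)]
        rw [dif_neg (by simp), Pi.single_eq_same]
        push_cast
        simp
      | cast t =>
        rw [Finset.sum_congr rfl (fun i (_ : i ∈ Finset.univ) => hrv_cast i t),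
          Finset.sum_sub_distrib, Finset.sum_ite_eq, Finset.sum_ite_eq]
        rw [dif_pos (show ((t.castSucc : Fin (n' + 1)) : ℕ) < n' from t.isLt),
          Pi.single_eq_of_ne (hcastne t)]
        simp only [Finset.mem_univ, if_true, hτσ t]
        have : uu (⟨(t.castSucc : Fin (n' + 1)), t.isLt⟩ : Fin n') = uu t := rfl
        push_cast
        rw [this]
        ring
    rw [heq]
    exact Submodule.sum_mem _ (fun i _ => Submodule.subset_span ⟨i, rfl⟩)
  -- second kernel consequence: equal values force lattice membership
  have hK2 : ∀ A B : Fin (n' + 1) → ℕ, ∑ j, A j * a j = ∑ j, B j * a j →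
      ∃ mm : Fin n' → ℤ, ∑ i, mm i • rvec i = fun j => (A j : ℤ) - B j := by
    intro A B hAB
    have hmem : ((∏ j, X j ^ A j) - ∏ j, X j ^ B j : MvPolynomial (Fin (n' + 1)) ℚ)
        ∈ Ideal.span (Set.range (ntF ℚ (n' + 1) hn u) ∪ {ntD ℚ (n' + 1) hn u}) := by
      have h0 : ((∏ j, X j ^ A j) - ∏ j, X j ^ B j : MvPolynomial (Fin (n' + 1)) ℚ)
          ∈ ntIdeal ℚ (n' + 1) hn u := by
        rw [← hker, RingHom.mem_ker]
        show (MvPolynomial.aeval (R := ℚ)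
          (fun j : Fin (n' + 1) => (Polynomial.X : Polynomial ℚ) ^ a j)) _ = 0
        rw [map_sub, ntAux_aeval_monomial, ntAux_aeval_monomial, hAB, sub_self]
      exact h0
    have hGens : ∀ g ∈ (Set.range (ntF ℚ (n' + 1) hn u) ∪ {ntD ℚ (n' + 1) hn u}),
        ∃ E F : Fin (n' + 1) → ℕ, g = (∏ j, X j ^ E j) - ∏ j, X j ^ F j ∧
          ((fun j => (E j : ℤ) - F j) ∈ L) := by
      rintro g (⟨i, rfl⟩ | rfl)
      · exact ⟨EE i, FF i, hntF_eq i, Submodule.subset_span ⟨i, rfl⟩⟩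
      · exact ⟨_, _, hntD_eq, hDvecL⟩
    have hmemL := ntAux_lattice L _ hGens hmem
    rw [hL] at hmemL
    obtain ⟨mm, hmm⟩ := (Submodule.mem_span_range_iff_exists_fun ℤ).mp hmemL
    exact ⟨mm, hmm⟩
  -- named quantities
  set NN : ℕ := ∑ i : Fin n', (uu i + vv i - 1) * bb i with hNN
  set μ : ℕ := sInf {m : ℕ | ∃ j : Fin n', m = vv j * bb j} with hμ
  suffices hmain : IsGreatest {z : ℤ | ¬ ∃ s ∈ AddSubmonoid.closure (Set.range a), (s : ℤ) = z}
      ((NN : ℤ) - (μ : ℤ) - (cc : ℤ)) by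
    have hcast : ((NN : ℤ)) = ∑ i : Fin n', (((uu i + vv i - 1) * bb i : ℕ) : ℤ) :=
      Nat.cast_sum _ _
    rw [hcast] at hmain
    exact hmain
  obtain ⟨j0, hj0⟩ : ∃ j0 : Fin n', μ = vv j0 * bb j0 :=
    Nat.sInf_mem (⟨vv ⟨0, by omega⟩ * bb ⟨0, by omega⟩, ⟨0, by omega⟩, rfl⟩ :
      Set.Nonempty {m : ℕ | ∃ j : Fin n', m = vv j * bb j})
  have hμle : ∀ j : Fin n', μ ≤ vv j * bb j := fun j => Nat.sInf_le ⟨j, rfl⟩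
  -- splitting sums over `Fin (n'+1)`
  have hsplit : ∀ (lam : Fin n' → ℕ) (k : ℕ),
      ∑ j : Fin (n' + 1), (if h : (j : ℕ) < n' then lam ⟨j, h⟩ else k) * a j
        = ∑ i, lam i * bb i + k * cc := by
    intro lam k
    rw [Fin.sum_univ_castSucc]
    congr 1
    · apply Finset.sum_congr rfl
      intro i _
      rw [dif_pos (show ((i.castSucc : Fin (n' + 1)) : ℕ) < n' from i.isLt)]
      rfl
    · rw [dif_neg (by simp)]
  have hsplit2 : ∀ ν : Fin (n' + 1) → ℕ,
      ∑ j, ν j * a j = ∑ i, ν i.castSucc * bb i + ν (Fin.last n') * cc := by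
    intro ν
    rw [Fin.sum_univ_castSucc]
  have hred : ∀ lam : Fin n' → ℕ, ∃ lam' : Fin n' → ℕ, ∃ k : ℕ,
      (∀ i, lam' i < uu i + vv i) ∧ (∃ j, lam' j < uu j) ∧
      ∑ i, lam i * bb i = ∑ i, lam' i * bb i + k * cc :=
    fun lam => ntAux_red (by omega) σF τF hστ hτσ hτne bb cc hcpos uu vv pp hppos hR lam
  have hwle : ∀ lam : Fin n' → ℕ, (∀ i, lam i < uu i + vv i) → (∃ j, lam j < uu j) →
      ∑ i, lam i * bb i + μ ≤ NN := by
    rintro lam hbox ⟨j, hj⟩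
    have h1 := hμle j
    have e1 : lam j * bb j + ∑ i ∈ Finset.univ.erase j, lam i * bb i = ∑ i, lam i * bb i :=
      Finset.add_sum_erase _ (fun i => lam i * bb i) (Finset.mem_univ j)
    have e2 : (uu j + vv j - 1) * bb j
        + ∑ i ∈ Finset.univ.erase j, (uu i + vv i - 1) * bb i
        = ∑ i, (uu i + vv i - 1) * bb i :=
      Finset.add_sum_erase _ (fun i => (uu i + vv i - 1) * bb i) (Finset.mem_univ j)
    have h3 : ∑ i ∈ Finset.univ.erase j, lam i * bb i
        ≤ ∑ i ∈ Finset.univ.erase j, (uu i + vv i - 1) * bb i :=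
      Finset.sum_le_sum (fun i _ => Nat.mul_le_mul (by have := hbox i; omega) (le_refl (bb i)))
    have h4 : lam j * bb j + vv j * bb j ≤ (uu j + vv j - 1) * bb j := by
      rw [← add_mul]
      exact Nat.mul_le_mul (by have := hup j; omega) (le_refl (bb j))
    omega
  constructor
  · -- the Frobenius number is not in the semigroup
    rintro ⟨s, hsmem, hseq⟩
    obtain ⟨ν, rfl⟩ := (ntAux_mem_closure_iff a s).mp hsmem
    rw [hsplit2 ν] at hseq
    obtain ⟨lam', k', hbox', hsub', hval'⟩ := hred (fun i => ν i.castSucc)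
    beta_reduce at hval'
    -- the extremal Apery element
    set lamS : Fin n' → ℕ :=
      Function.update (fun i : Fin n' => uu i + vv i - 1) j0 (uu j0 - 1) with hlamS
    have hboxS : ∀ i, lamS i < uu i + vv i := by
      intro i
      rw [hlamS]
      rcases eq_or_ne i j0 with rfl | h
      · rw [Function.update_self]
        have := hup i; have := hvp i; omega
      · rw [Function.update_of_ne h]
        have := hup i; have := hvp i; omega
    have hsubS : ∃ j, lamS j < uu j := by
      refine ⟨j0, ?_⟩
      rw [hlamS, Function.update_self]
      have := hup j0; omega
    have hAup : ∑ i, lamS i * bb i + (uu j0 + vv j0 - 1) * bb j0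
        = (∑ i, (uu i + vv i - 1) * bb i) + (uu j0 - 1) * bb j0 :=
      ntAux_sum_update bb _ j0 _
    have e : (uu j0 + vv j0 - 1) * bb j0 = (uu j0 - 1) * bb j0 + vv j0 * bb j0 := by
      rw [← add_mul]
      congr 1
      have := hup j0; omega
    have hNS : ∑ i, lamS i * bb i + μ = NN := by
      rw [hj0, hNN]; omega
    -- value comparison
    have hNat : ∑ i, ν i.castSucc * bb i + ν (Fin.last n') * cc + μ + cc = NN := by
      omega
    have hex : (k' + ν (Fin.last n') + 1) * cc = k' * cc + ν (Fin.last n') * cc + cc := by ring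
    have hABval : ∑ j : Fin (n' + 1), (if h : (j : ℕ) < n' then lamS ⟨j, h⟩ else 0) * a j
        = ∑ j : Fin (n' + 1),
            (if h : (j : ℕ) < n' then lam' ⟨j, h⟩ else k' + ν (Fin.last n') + 1) * a j := by
      rw [hsplit lamS 0, hsplit lam' (k' + ν (Fin.last n') + 1)]
      omega
    obtain ⟨mm, hmm⟩ := hK2 _ _ hABval
    have hrelcoord : ∀ t : Fin n', (lamS t : ℤ) - lam' t
        = mm t * (uu t + vv t) - mm (σF t) * vv t := by
      intro t
      have h1 : (∑ i, mm i • rvec i) (Fin.castSucc t)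
          = (((if h : ((t.castSucc : Fin (n' + 1)) : ℕ) < n' then lamS ⟨t.castSucc, h⟩ else 0) : ℕ) : ℤ)
            - ((if h : ((t.castSucc : Fin (n' + 1)) : ℕ) < n' then lam' ⟨t.castSucc, h⟩
                else k' + ν (Fin.last n') + 1) : ℕ) := congrFun hmm _
      rw [hsumvec, dif_pos (show ((t.castSucc : Fin (n' + 1)) : ℕ) < n' from t.isLt),
        dif_pos (show ((t.castSucc : Fin (n' + 1)) : ℕ) < n' from t.isLt)] at h1
      have e1 : (⟨((t.castSucc : Fin (n' + 1)) : ℕ), t.isLt⟩ : Fin n') = t := rfl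
      rw [e1] at h1
      omega
    have hmz : ∀ i, mm i = 0 :=
      ntAux_CL (by omega) σF hσval uu vv hup hvp mm lamS lam' hboxS hbox' hsubS hsub' hrelcoord
    have h2 : (∑ i, mm i • rvec i) (Fin.last n')
        = (((if h : ((Fin.last n' : Fin (n' + 1)) : ℕ) < n' then lamS ⟨Fin.last n', h⟩ else 0) : ℕ) : ℤ)
          - ((if h : ((Fin.last n' : Fin (n' + 1)) : ℕ) < n' then lam' ⟨Fin.last n', h⟩
              else k' + ν (Fin.last n') + 1) : ℕ) := congrFun hmm _
    rw [hsumlast, dif_neg (by simp), dif_neg (by simp)] at h2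
    have h3 : ∑ i, mm i * (pp i : ℤ) = 0 := by
      rw [Finset.sum_congr rfl (fun i (_ : i ∈ Finset.univ) => by rw [hmz i, zero_mul])]
      simp
    rw [h3] at h2
    omega
  · -- every larger integer is in the semigroup
    intro z hz
    by_contra hlt
    push_neg at hlt
    obtain ⟨g, hg⟩ := ntAux_gcd_bezout Finset.univ a
    rw [hgcd] at hg
    set T : Fin n' → ℕ := fun i => ((z * g i.castSucc) % cc).toNat with hT
    have hTval : ∀ i, (T i : ℤ) = (z * g i.castSucc) % cc := by
      intro i
      rw [hT]
      exact Int.toNat_of_nonneg (Int.emod_nonneg _ (by exact_mod_cast hcpos.ne'))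
    have hz1 : (z : ℤ) = ∑ i : Fin n', (z * g i.castSucc) * bb i
        + (z * g (Fin.last n')) * cc := by
      have h1 : (z : ℤ) = z * ∑ j, g j * a j := by
        rw [hg]; push_cast; ring
      rw [Finset.mul_sum, Fin.sum_univ_castSucc] at h1
      nth_rewrite 1 [h1]
      congr 1
      · apply Finset.sum_congr rfl
        intro i _
        show z * (g i.castSucc * (bb i : ℤ)) = _
        ring
      · show z * (g (Fin.last n') * (cc : ℤ)) = _
        ring
    have hdvd1 : (cc : ℤ) ∣ (z - ∑ i, (T i : ℤ) * bb i) := by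
      have h2 : z - ∑ i, (T i : ℤ) * bb i
          = ∑ i, ((z * g i.castSucc) - T i) * bb i + (z * g (Fin.last n')) * cc := by
        have e : ∀ i : Fin n', ((z * g i.castSucc) - T i) * (bb i : ℤ)
            = (z * g i.castSucc) * bb i - T i * bb i := fun i => by ring
        rw [Finset.sum_congr rfl (fun i (_ : i ∈ Finset.univ) => e i), Finset.sum_sub_distrib]
        nth_rewrite 1 [hz1]
        ring
      rw [h2]
      apply dvd_add
      · apply Finset.dvd_sum
        intro i _
        apply Dvd.dvd.mul_right
        refine ⟨(z * g i.castSucc) / cc, ?_⟩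
        rw [hTval i, Int.emod_def]
        ring
      · exact dvd_mul_left _ _
    obtain ⟨lam', k, hbox', hsub', hval'⟩ := hred T
    set w : ℕ := ∑ i, lam' i * bb i with hw
    have hwμ : w + μ ≤ NN := hwle lam' hbox' hsub'
    have hvc : (∑ i, (T i : ℤ) * bb i) = (w : ℤ) + k * cc := by
      exact_mod_cast hval'
    have hdvd2 : (cc : ℤ) ∣ (z - w) := by
      have h3 : z - (w : ℤ) = (z - ∑ i, (T i : ℤ) * bb i) + k * cc := by
        rw [hvc]; ring
      rw [h3]
      exact dvd_add hdvd1 (dvd_mul_left _ _)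
    have hge : (0 : ℤ) ≤ z - w := by
      by_contra hneg
      push_neg at hneg
      have h5 : (cc : ℤ) ∣ ((w : ℤ) - z) := neg_sub (z : ℤ) (w : ℤ) ▸ dvd_neg.mpr hdvd2
      have h6 : (cc : ℤ) ≤ (w : ℤ) - z := Int.le_of_dvd (by omega) h5
      have h7 : ((w : ℤ)) + μ ≤ NN := by exact_mod_cast hwμ
      omega
    obtain ⟨q, hq⟩ := hdvd2
    have hq0 : 0 ≤ q := by
      rcases le_or_gt 0 q with h | h
      · exact h
      · have h6 : (cc : ℤ) * q < 0 :=
          mul_neg_of_pos_of_neg (by exact_mod_cast hcpos) h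
        omega
    refine hz ⟨w + q.toNat * cc, ?_, ?_⟩
    · rw [ntAux_mem_closure_iff a]
      exact ⟨fun j => if h : (j : ℕ) < n' then lam' ⟨j, h⟩ else q.toNat, (hsplit lam' q.toNat).symm⟩
    · push_cast
      rw [Int.toNat_of_nonneg hq0]
      linarith [hq]
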